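/- Region invariance fails for real-valued parametric TCTL: for the timed automaton 𝓐 with locations ℓ_0,…,ℓ_4, edges ℓ_0 →(0<x_1<1, reset x_1) ℓ_1, ℓ_1 →(x_1=0) ℓ_2, ℓ_2 →(x_2=1) ℓ_3, ℓ_3 →(x_2=1, reset x_1) ℓ_4, ℓ_4 →(reset x_1) ℓ_4, and labelling LB(ℓ_1)={p_1}, LB(ℓ_3)={p_2}, the configuration (ℓ_0, 0⃗) satisfies ∃F(p_1 ∧ ∃F_{=θ} p_2) for every real 0 < θ < 1, but for no natural number θ ∈ ℕ. -/
import Mathlib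


/-- Configurations of the timed automaton of Figure 3: a location `ℓ_0,…,ℓ_4`
together with the values of the two clocks `x_1, x_2`. -/
abbrev Config : Type := Fin 5 × ℝ × ℝ

/-- The discrete transitions of the timed automaton:
`ℓ_0 →(0<x_1<1, x_1←0) ℓ_1`, `ℓ_1 →(x_1=0) ℓ_2`, `ℓ_2 →(x_2=1) ℓ_3`,
`ℓ_3 →(x_2=1, x_1←0) ℓ_4`, `ℓ_4 →(x_1←0) ℓ_4`. -/
inductive Discrete : Config → Config → Prop
  | e01 (v1 v2 : ℝ) : 0 < v1 → v1 < 1 → Discrete (0, v1, v2) (1, 0, v2)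
  | e12 (v1 v2 : ℝ) : v1 = 0 → Discrete (1, v1, v2) (2, v1, v2)
  | e23 (v1 v2 : ℝ) : v2 = 1 → Discrete (2, v1, v2) (3, v1, v2)
  | e34 (v1 v2 : ℝ) : v2 = 1 → Discrete (3, v1, v2) (4, 0, v2)
  | e44 (v1 v2 : ℝ) : Discrete (4, v1, v2) (4, 0, v2)

/-- An infinite run: at each step either a delay transition of duration `d i ≥ 0`
or a discrete transition (of duration `0`). -/
def IsRun (ρ : ℕ → Config) (d : ℕ → ℝ) : Prop :=
  ∀ i, (0 ≤ d i ∧ ρ (i + 1) = ((ρ i).1, (ρ i).2.1 + d i, (ρ i).2.2 + d i)) ∨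
    (d i = 0 ∧ Discrete (ρ i) (ρ (i + 1)))

/-- Non-zenoness: the cumulative delay diverges and there are infinitely many
discrete transitions. -/
def NonZeno (ρ : ℕ → Config) (d : ℕ → ℝ) : Prop :=
  (∀ B : ℝ, ∃ N : ℕ, B ≤ ∑ i ∈ Finset.range N, d i) ∧
  (∀ N : ℕ, ∃ i : ℕ, N ≤ i ∧ Discrete (ρ i) (ρ (i + 1)))

/-- `q ⊨ ∃F_{=θ} p_2`: some infinite non-zeno run from `q` is, after cumulative
delay exactly `θ`, in location `ℓ_3` (the location labelled `p_2`). -/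
def SatEFeq (θ : ℝ) (q : Config) : Prop :=
  ∃ ρ d, IsRun ρ d ∧ NonZeno ρ d ∧ ρ 0 = q ∧
    ∃ j : ℕ, (∑ i ∈ Finset.range j, d i) = θ ∧ (ρ j).1 = 3

/-- `(ℓ_0, 0⃗) ⊨ ∃F (p_1 ∧ ∃F_{=θ} p_2)`: some infinite non-zeno run from the
initial configuration reaches a configuration in location `ℓ_1` (labelled `p_1`)
which satisfies `∃F_{=θ} p_2`. -/
def SatFormula (θ : ℝ) : Prop :=
  ∃ ρ d, IsRun ρ d ∧ NonZeno ρ d ∧ ρ 0 = ((0 : Fin 5), (0 : ℝ), (0 : ℝ)) ∧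
    ∃ i : ℕ, (ρ i).1 = 1 ∧ SatEFeq θ (ρ i)

/-! ### Auxiliary definitions and lemmas -/

/-- The witnessing run for `0 < θ < 1`. -/
noncomputable def run (θ : ℝ) : ℕ → Config
  | 0 => (0, 0, 0)
  | 1 => (0, 1 - θ, 1 - θ)
  | 2 => (1, 0, 1 - θ)
  | 3 => (2, 0, 1 - θ)
  | 4 => (2, θ, 1)
  | 5 => (3, θ, 1)
  | (k + 6) => if k % 2 = 0 then ((4 : Fin 5), (0 : ℝ), ((k / 2 + 1 : ℕ) : ℝ))
               else ((4 : Fin 5), (1 : ℝ), ((k / 2 + 2 : ℕ) : ℝ))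

/-- The delays of the witnessing run. -/
noncomputable def del (θ : ℝ) : ℕ → ℝ
  | 0 => 1 - θ
  | 1 => 0
  | 2 => 0
  | 3 => θ
  | 4 => 0
  | 5 => 0
  | (k + 6) => if k % 2 = 0 then 1 else 0


lemma loc_ne {l1 l2 : Fin 5} {x y : ℝ × ℝ} (hne : l1 ≠ l2)
    (h : ((l1, x) : Config) = (l2, y)) : False := hne (congrArg Prod.fst h)

lemma loc_ne' {l1 l2 : Fin 5} {x : ℝ × ℝ} (hne : l1 ≠ l2)
    (h : ((l1, x) : Config).1 = l2) : False := hne h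

lemma run_isRun (θ : ℝ) (h0 : 0 < θ) (h1 : θ < 1) : IsRun (run θ) (del θ) := by
  intro i
  match i with
  | 0 =>
    refine Or.inl ⟨show (0:ℝ) ≤ 1 - θ by linarith, ?_⟩
    show ((0 : Fin 5), 1 - θ, 1 - θ) = ((0 : Fin 5), 0 + (1 - θ), 0 + (1 - θ))
    simp only [Prod.mk.injEq, true_and]
    exact ⟨by ring, by ring⟩
  | 1 =>
    refine Or.inr ⟨rfl, ?_⟩
    show Discrete ((0 : Fin 5), 1 - θ, 1 - θ) ((1 : Fin 5), 0, 1 - θ)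
    exact Discrete.e01 _ _ (by linarith) (by linarith)
  | 2 =>
    refine Or.inr ⟨rfl, ?_⟩
    show Discrete ((1 : Fin 5), 0, 1 - θ) ((2 : Fin 5), 0, 1 - θ)
    exact Discrete.e12 _ _ rfl
  | 3 =>
    refine Or.inl ⟨show (0:ℝ) ≤ θ by linarith, ?_⟩
    show ((2 : Fin 5), θ, (1 : ℝ)) = ((2 : Fin 5), 0 + θ, (1 - θ) + θ)
    simp only [Prod.mk.injEq, true_and]
    exact ⟨by ring, by ring⟩
  | 4 =>
    refine Or.inr ⟨rfl, ?_⟩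
    show Discrete ((2 : Fin 5), θ, 1) ((3 : Fin 5), θ, 1)
    exact Discrete.e23 _ _ rfl
  | 5 =>
    refine Or.inr ⟨rfl, ?_⟩
    have h6 : (6 : ℕ) = 0 + 6 := rfl
    show Discrete (run θ 5) (run θ 6)
    rw [h6]
    have : run θ (0 + 6) = ((4 : Fin 5), (0 : ℝ), (1 : ℝ)) := by
      simp only [run]; norm_num
    rw [this]
    exact Discrete.e34 _ _ rfl
  | (k + 6) =>
    rcases Nat.even_or_odd k with ⟨n, hn⟩ | ⟨n, hn⟩
    · -- k = 2n : delay of duration 1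
      obtain ⟨n, rfl⟩ : ∃ n', k = 2 * n' := ⟨n, by omega⟩
      have e1 : (2 * n) % 2 = 0 := by omega
      have e2 : (2 * n) / 2 = n := by omega
      have hidx : 2 * n + 6 + 1 = (2 * n + 1) + 6 := by omega
      have e3 : (2 * n + 1) % 2 = 1 := by omega
      have e4 : (2 * n + 1) / 2 = n := by omega
      refine Or.inl ⟨by simp only [del, e1]; norm_num, ?_⟩
      rw [hidx]
      simp only [run, del, e1, e2, e3, e4]
      norm_num [Prod.mk.injEq]
      push_cast
      ring
    · -- k = 2n+1 : discrete e44
      obtain ⟨n, rfl⟩ : ∃ n', k = 2 * n' + 1 := ⟨n, by omega⟩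
      have e1 : (2 * n + 1) % 2 = 1 := by omega
      have e2 : (2 * n + 1) / 2 = n := by omega
      have hidx : 2 * n + 1 + 6 + 1 = (2 * n + 2) + 6 := by omega
      have e3 : (2 * n + 2) % 2 = 0 := by omega
      have e4 : (2 * n + 2) / 2 = n + 1 := by omega
      refine Or.inr ⟨by simp only [del, e1]; norm_num, ?_⟩
      rw [hidx]
      simp only [run, e1, e2, e3, e4]
      norm_num
      have hc : ((n : ℝ) + 1 + 1) = ((n : ℝ) + 2) := by ring
      push_cast
      rw [hc]
      exact Discrete.e44 1 _

lemma sum_del (θ : ℝ) (n : ℕ) :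
    ∑ i ∈ Finset.range (6 + 2 * n), del θ i = 1 + n := by
  induction n with
  | zero =>
    show ∑ i ∈ Finset.range 6, del θ i = 1 + ((0 : ℕ) : ℝ)
    simp [Finset.sum_range_succ, del]
  | succ n ih =>
    have h : 6 + 2 * (n + 1) = (6 + 2 * n) + 1 + 1 := by ring
    rw [h, Finset.sum_range_succ, Finset.sum_range_succ, ih]
    have h1 : 6 + 2 * n = (2 * n) + 6 := by ring
    have h2 : 6 + 2 * n + 1 = (2 * n + 1) + 6 := by omega
    rw [h2, h1]
    have e1 : (2 * n) % 2 = 0 := by omega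
    have e2 : (2 * n + 1) % 2 = 1 := by omega
    simp only [del, e1, e2]
    push_cast
    norm_num
    ring

lemma run_nonZeno (θ : ℝ) : NonZeno (run θ) (del θ) := by
  constructor
  · intro B
    refine ⟨6 + 2 * ⌈B⌉₊, ?_⟩
    rw [sum_del]
    have := Nat.le_ceil B
    linarith
  · intro N
    refine ⟨2 * N + 7, by omega, ?_⟩
    have h1 : 2 * N + 7 = (2 * N + 1) + 6 := by omega
    have h2 : 2 * N + 7 + 1 = (2 * N + 2) + 6 := by omega
    rw [h1, h2]
    have e1 : (2 * N + 1) % 2 = 1 := by omega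
    have e2 : (2 * N + 1) / 2 = N := by omega
    have e3 : (2 * N + 2) % 2 = 0 := by omega
    have e4 : (2 * N + 2) / 2 = N + 1 := by omega
    simp only [run, e1, e2, e3, e4]
    norm_num
    have hc : ((N : ℝ) + 1 + 1) = ((N : ℝ) + 2) := by ring
    push_cast
    rw [hc]
    exact Discrete.e44 1 _

lemma sum_del_shift (θ : ℝ) (N : ℕ) :
    ∑ i ∈ Finset.range N, del θ (2 + i)
      = (∑ i ∈ Finset.range (2 + N), del θ i) - (1 - θ) := by
  induction N with
  | zero => simp [Finset.sum_range_succ, del]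
  | succ N ih =>
    rw [Finset.sum_range_succ, ih]
    have h : 2 + (N + 1) = (2 + N) + 1 := by omega
    rw [h, Finset.sum_range_succ]
    ring

/-- The positive part: `SatFormula θ` for `0 < θ < 1`. -/
lemma pos_part (θ : ℝ) (h0 : 0 < θ) (h1 : θ < 1) : SatFormula θ := by
  refine ⟨run θ, del θ, run_isRun θ h0 h1, run_nonZeno θ, rfl, 2, rfl, ?_⟩
  -- inner run: the shift of `run θ` by 2
  refine ⟨fun k => run θ (2 + k), fun k => del θ (2 + k), ?_, ?_, rfl, 3, ?_, rfl⟩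
  · intro i; exact run_isRun θ h0 h1 (2 + i)
  · constructor
    · intro B
      refine ⟨4 + 2 * ⌈B⌉₊, ?_⟩
      show B ≤ ∑ i ∈ Finset.range (4 + 2 * ⌈B⌉₊), del θ (2 + i)
      rw [sum_del_shift]
      have h : 2 + (4 + 2 * ⌈B⌉₊) = 6 + 2 * ⌈B⌉₊ := by omega
      rw [h, sum_del]
      have := Nat.le_ceil B
      linarith
    · intro N
      obtain ⟨i, hi, hd⟩ := (run_nonZeno θ).2 (2 + N)
      refine ⟨i - 2, by omega, ?_⟩
      show Discrete (run θ (2 + (i - 2))) (run θ (2 + (i - 2) + 1))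
      have h : 2 + (i - 2) = i := by omega
      rw [h]
      exact hd
  · show ∑ i ∈ Finset.range 3, del θ (2 + i) = θ
    rw [Finset.sum_range_succ, Finset.sum_range_succ, Finset.sum_range_succ,
      Finset.sum_range_zero]
    show 0 + del θ 2 + del θ 3 + del θ 4 = θ
    simp [del]

/-! ### Negative part -/

/-- Inversion lemma for discrete transitions. -/
lemma discrete_inv {a b : Config} (h : Discrete a b) :
    (∃ v1 v2, 0 < v1 ∧ v1 < 1 ∧ a = (0, v1, v2) ∧ b = (1, 0, v2)) ∨
    (∃ v2, a = (1, 0, v2) ∧ b = (2, 0, v2)) ∨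
    (∃ v1, a = (2, v1, 1) ∧ b = (3, v1, 1)) ∨
    (∃ v1, a = (3, v1, 1) ∧ b = (4, 0, 1)) ∨
    (∃ v1 v2, a = (4, v1, v2) ∧ b = (4, 0, v2)) := by
  cases h with
  | e01 v1 v2 ha hb => exact Or.inl ⟨v1, v2, ha, hb, rfl, rfl⟩
  | e12 v1 v2 ha => subst ha; exact Or.inr (Or.inl ⟨v2, rfl, rfl⟩)
  | e23 v1 v2 ha => subst ha; exact Or.inr (Or.inr (Or.inl ⟨v1, rfl, rfl⟩))
  | e34 v1 v2 ha => subst ha; exact Or.inr (Or.inr (Or.inr (Or.inl ⟨v1, rfl, rfl⟩)))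
  | e44 v1 v2 => exact Or.inr (Or.inr (Or.inr (Or.inr ⟨v1, v2, rfl, rfl⟩)))

lemma delays_nonneg {ρ : ℕ → Config} {d : ℕ → ℝ} (h : IsRun ρ d) (i : ℕ) : 0 ≤ d i := by
  rcases h i with ⟨h', _⟩ | ⟨h', _⟩
  · exact h'
  · rw [h']

/-- Invariant of any run started at `(ℓ_0, 0, 0)`: at `ℓ_0` both clocks are equal
and nonnegative; at `ℓ_1`, `x_1 ≥ 0` and `0 < x_2 - x_1 < 1`. -/
lemma outer_inv {ρ : ℕ → Config} {d : ℕ → ℝ} (h : IsRun ρ d)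
    (h0 : ρ 0 = ((0 : Fin 5), (0 : ℝ), (0 : ℝ))) (k : ℕ) :
    ((ρ k).1 = 0 → (ρ k).2.1 = (ρ k).2.2 ∧ 0 ≤ (ρ k).2.1) ∧
    ((ρ k).1 = 1 →
      0 ≤ (ρ k).2.1 ∧ 0 < (ρ k).2.2 - (ρ k).2.1 ∧ (ρ k).2.2 - (ρ k).2.1 < 1) := by
  induction k with
  | zero =>
    rw [h0]
    exact ⟨fun _ => ⟨rfl, le_refl 0⟩, fun hc => absurd hc (by decide)⟩
  | succ k ih =>
    rcases h k with ⟨hd, he⟩ | ⟨hd, he⟩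
    · rw [he]; dsimp only
      constructor
      · intro hl
        obtain ⟨h1, h2⟩ := ih.1 hl
        exact ⟨by linarith, by linarith⟩
      · intro hl
        obtain ⟨h1, h2, h3⟩ := ih.2 hl
        exact ⟨by linarith, by linarith, by linarith⟩
    · rcases discrete_inv he with ⟨v1, v2, ha, hb, hc, hdd⟩ | ⟨v2, hc, hdd⟩ |
        ⟨v1, hc, hdd⟩ | ⟨v1, hc, hdd⟩ | ⟨v1, v2, hc, hdd⟩
      · -- e01
        rw [hdd]; dsimp only
        refine ⟨fun hl => absurd hl (by decide), fun _ => ?_⟩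
        have hl0 : (ρ k).1 = 0 := by rw [hc]
        obtain ⟨h1, h2⟩ := ih.1 hl0
        rw [hc] at h1 h2; dsimp only at h1 h2
        exact ⟨le_refl 0, by linarith, by linarith⟩
      · rw [hdd]
        exact ⟨fun hl => (loc_ne' (by decide) hl).elim, fun hl => (loc_ne' (by decide) hl).elim⟩
      · rw [hdd]
        exact ⟨fun hl => (loc_ne' (by decide) hl).elim, fun hl => (loc_ne' (by decide) hl).elim⟩
      · rw [hdd]
        exact ⟨fun hl => (loc_ne' (by decide) hl).elim, fun hl => (loc_ne' (by decide) hl).elim⟩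
      · rw [hdd]
        exact ⟨fun hl => (loc_ne' (by decide) hl).elim, fun hl => (loc_ne' (by decide) hl).elim⟩

/-- Key analysis of any non-zeno run started at `(ℓ_1, v1, v2)` with `v1 ≥ 0`:
if at step `j` it is at `ℓ_3`, then `v1 = 0` and the cumulative delay is `1 - v2`. -/
lemma inner_loc3 {σ : ℕ → Config} {e : ℕ → ℝ} (h : IsRun σ e) (hnz : NonZeno σ e)
    {v1 v2 : ℝ} (h0 : σ 0 = ((1 : Fin 5), v1, v2)) (hv1 : 0 ≤ v1)
    {j : ℕ} (hj : (σ j).1 = 3) :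
    v1 = 0 ∧ (∑ i ∈ Finset.range j, e i) = 1 - v2 := by
  set S : ℕ → ℝ := fun k => ∑ i ∈ Finset.range k, e i with hS
  have hS0 : ∀ k, 0 ≤ S k := fun k =>
    Finset.sum_nonneg (fun i _ => delays_nonneg h i)
  have hSsucc : ∀ k, S (k + 1) = S k + e k := fun k => Finset.sum_range_succ _ _
  have key : ∀ k, (σ k = ((1 : Fin 5), v1 + S k, v2 + S k))
      ∨ (v1 = 0 ∧ σ k = ((2 : Fin 5), S k, v2 + S k))
      ∨ (v1 = 0 ∧ σ k = ((3 : Fin 5), S k, v2 + S k) ∧ 1 ≤ v2 + S k)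
      ∨ ((σ k).1 = 4) := by
    intro k
    induction k with
    | zero =>
      left
      rw [h0]
      simp [hS]
    | succ k ih =>
      rcases h k with ⟨hd, he⟩ | ⟨hd, he⟩
      · -- delay step
        rcases ih with h1 | ⟨hv, h2⟩ | ⟨hv, h2, h3⟩ | h4
        · left; rw [he, h1, hSsucc]; dsimp only; simp only [Prod.mk.injEq, true_and]
          first
          | (refine ⟨?_, ?_⟩ <;> first | trivial | ring)
          | ring
          | trivial
        · right; left
          refine ⟨hv, ?_⟩
          rw [he, h2, hSsucc]; dsimp only; simp only [Prod.mk.injEq, true_and]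
          first
          | (refine ⟨?_, ?_⟩ <;> first | trivial | ring)
          | ring
          | trivial
        · right; right; left
          refine ⟨hv, ?_, ?_⟩
          · rw [he, h2, hSsucc]; dsimp only; simp only [Prod.mk.injEq, true_and]
            first
            | (refine ⟨?_, ?_⟩ <;> first | trivial | ring)
            | ring
            | trivial
          · rw [hSsucc]; linarith
        · right; right; right; rw [he]; exact h4
      · -- discrete step; e k = 0
        have hS' : S (k + 1) = S k := by rw [hSsucc, hd, add_zero]
        rcases ih with h1 | ⟨hv, h2⟩ | ⟨hv, h2, h3⟩ | h4
        · -- at ℓ_1 : only e12 applies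
          rcases discrete_inv he with ⟨w1, w2, _, _, hc, hdd⟩ | ⟨w2, hc, hdd⟩ |
              ⟨w1, hc, hdd⟩ | ⟨w1, hc, hdd⟩ | ⟨w1, w2, hc, hdd⟩
          · rw [h1] at hc; exact (loc_ne (by decide) hc).elim
          · rw [h1] at hc
            simp only [Prod.mk.injEq, true_and] at hc
            obtain ⟨hc1, hc2⟩ := hc
            have hv0 : v1 = 0 := by have := hS0 k; linarith
            have hSk : S k = 0 := by have := hS0 k; linarith
            right; left
            refine ⟨hv0, ?_⟩
            rw [hdd, hS', hSk]; simp only [Prod.mk.injEq, true_and]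
            first
            | exact ⟨rfl, by rw [← hc2, hSk]⟩
            | (rw [← hc2, hSk])
            | exact ⟨by rw [← hc2, hSk], rfl⟩
          · rw [h1] at hc; exact (loc_ne (by decide) hc).elim
          · rw [h1] at hc; exact (loc_ne (by decide) hc).elim
          · rw [h1] at hc; exact (loc_ne (by decide) hc).elim
        · -- at ℓ_2 : only e23 applies
          rcases discrete_inv he with ⟨w1, w2, _, _, hc, hdd⟩ | ⟨w2, hc, hdd⟩ |
              ⟨w1, hc, hdd⟩ | ⟨w1, hc, hdd⟩ | ⟨w1, w2, hc, hdd⟩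
          · rw [h2] at hc; exact (loc_ne (by decide) hc).elim
          · rw [h2] at hc; exact (loc_ne (by decide) hc).elim
          · rw [h2] at hc
            simp only [Prod.mk.injEq, true_and] at hc
            obtain ⟨hc1, hc2⟩ := hc
            right; right; left
            refine ⟨hv, ?_, ?_⟩
            · rw [hdd, hS']; simp only [Prod.mk.injEq, true_and]
              exact ⟨hc1.symm, hc2.symm⟩
            · rw [hS', hc2]
          · rw [h2] at hc; exact (loc_ne (by decide) hc).elim
          · rw [h2] at hc; exact (loc_ne (by decide) hc).elim
        · -- at ℓ_3 : only e34 applies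
          rcases discrete_inv he with ⟨w1, w2, _, _, hc, hdd⟩ | ⟨w2, hc, hdd⟩ |
              ⟨w1, hc, hdd⟩ | ⟨w1, hc, hdd⟩ | ⟨w1, w2, hc, hdd⟩
          · rw [h2] at hc; exact (loc_ne (by decide) hc).elim
          · rw [h2] at hc; exact (loc_ne (by decide) hc).elim
          · rw [h2] at hc; exact (loc_ne (by decide) hc).elim
          · right; right; right; rw [hdd]
          · rw [h2] at hc; exact (loc_ne (by decide) hc).elim
        · -- at ℓ_4 : only e44 applies
          rcases discrete_inv he with ⟨w1, w2, _, _, hc, hdd⟩ | ⟨w2, hc, hdd⟩ |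
              ⟨w1, hc, hdd⟩ | ⟨w1, hc, hdd⟩ | ⟨w1, w2, hc, hdd⟩
          · rw [hc] at h4; exact (loc_ne' (by decide) h4).elim
          · rw [hc] at h4; exact (loc_ne' (by decide) h4).elim
          · rw [hc] at h4; exact (loc_ne' (by decide) h4).elim
          · rw [hc] at h4; exact (loc_ne' (by decide) h4).elim
          · right; right; right; rw [hdd]
  -- at step j the run is at ℓ_3, so we are in the third disjunct
  rcases key j with h1 | ⟨hv, h2⟩ | ⟨hv, h2, h3⟩ | h4
  · rw [h1] at hj; exact (loc_ne' (by decide) hj).elim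
  · rw [h2] at hj; exact (loc_ne' (by decide) hj).elim
  · -- show v2 + S j = 1, otherwise the run is stuck at ℓ_3
    refine ⟨hv, ?_⟩
    rcases eq_or_lt_of_le h3 with heq | hlt
    · show S j = 1 - v2; linarith
    · exfalso
      -- the run is stuck at ℓ_3 forever: contradiction with non-zenoness
      have stuck : ∀ k, j ≤ k → ∃ a b : ℝ, σ k = ((3 : Fin 5), a, b) ∧ 1 < b := by
        intro k hk
        induction k, hk using Nat.le_induction with
        | base => exact ⟨S j, v2 + S j, h2, hlt⟩
        | succ k hk ihk =>
          obtain ⟨a, b, hab, hb⟩ := ihk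
          rcases h k with ⟨hd, he⟩ | ⟨hd, he⟩
          · refine ⟨a + e k, b + e k, ?_, by linarith [delays_nonneg h k]⟩
            rw [he, hab]
          · exfalso
            rcases discrete_inv he with ⟨w1, w2, _, _, hc, hdd⟩ | ⟨w2, hc, hdd⟩ |
                ⟨w1, hc, hdd⟩ | ⟨w1, hc, hdd⟩ | ⟨w1, w2, hc, hdd⟩
            · rw [hab] at hc; exact loc_ne (by decide) hc
            · rw [hab] at hc; exact loc_ne (by decide) hc
            · rw [hab] at hc; exact loc_ne (by decide) hc
            · rw [hab] at hc
              simp only [Prod.mk.injEq, true_and] at hc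
              linarith [hc.2]
            · rw [hab] at hc; exact loc_ne (by decide) hc
      obtain ⟨i, hij, hdc⟩ := hnz.2 j
      obtain ⟨a, b, hab, hb⟩ := stuck i hij
      rcases discrete_inv hdc with ⟨w1, w2, _, _, hc, hdd⟩ | ⟨w2, hc, hdd⟩ |
          ⟨w1, hc, hdd⟩ | ⟨w1, hc, hdd⟩ | ⟨w1, w2, hc, hdd⟩
      · rw [hab] at hc; exact (loc_ne (by decide) hc).elim
      · rw [hab] at hc; exact (loc_ne (by decide) hc).elim
      · rw [hab] at hc; exact (loc_ne (by decide) hc).elim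
      · rw [hab] at hc
        simp only [Prod.mk.injEq, true_and] at hc
        linarith [hc.2]
      · rw [hab] at hc; exact (loc_ne (by decide) hc).elim
  · exact absurd (h4.symm.trans hj) (by decide)

theorem stmt19 :
    (∀ θ : ℝ, 0 < θ → θ < 1 → SatFormula θ) ∧
    (∀ m : ℕ, ¬ SatFormula (m : ℝ)) := by
  constructor
  · exact pos_part
  · intro m hm
    obtain ⟨ρ, d, hr, hnz, h0, i, hloc, hsat⟩ := hm
    obtain ⟨σ, e, hr', hnz', hσ0, j, hsum, hj⟩ := hsat
    have hρi : ρ i = ((1 : Fin 5), (ρ i).2.1, (ρ i).2.2) := by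
      rw [← hloc]
    have hout := (outer_inv hr h0 i).2 hloc
    have hσ0' : σ 0 = ((1 : Fin 5), (ρ i).2.1, (ρ i).2.2) := by rw [hσ0, hρi]
    obtain ⟨hv0, hSj⟩ := inner_loc3 hr' hnz' hσ0' hout.1 hj
    rw [hsum] at hSj
    have hv2lt : (ρ i).2.2 < 1 := by linarith [hout.2.1, hout.2.2]
    have hv2pos : 0 < (ρ i).2.2 := by
      have := hout.2.1; rw [hv0] at this; linarith
    have hm0 : (0 : ℝ) < m := by linarith
    have hm1 : (m : ℝ) < 1 := by linarith
    have h1 : 0 < m := by exact_mod_cast hm0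
    have h2 : (1 : ℝ) ≤ (m : ℝ) := by exact_mod_cast h1
    linarith
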